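/- Let α > 0, ω ∈ ℝ, c ∈ ℂ, and set g₀ᵇ(t) = α e^{iωt}, g₁ᵇ(t) = c e^{iωt}. For each k ∈ ℂ, the unique solution ψ(t,k) of ψ_t + 2ik²σ₃ψ = Vᵇ(t,k)ψ with ψ(0,k) = I is given explicitly by ψ(t,k) = exp( (iωt/2) σ₃ ) · exp( t·W(k) ), where W(k) = −(iω/2) σ₃ − 2ik² σ₃ + Vᵇ(0,k); here Vᵇ(0,k) is the matrix with entries −iα², 2kα + ic, 2kα − i·conj(c), iα², and exp denotes the matrix exponential. -/

import Mathlib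

open Matrix Complex

noncomputable section

/-- The third Pauli matrix `σ₃ = diag(1, -1)`. -/
def sigma3 : Matrix (Fin 2) (Fin 2) ℂ := !![1, 0; 0, -1]

/-- The first Pauli matrix `σ₁`. -/
def sigma1 : Matrix (Fin 2) (Fin 2) ℂ := !![0, 1; 1, 0]

/-- The coefficient matrix `Vᵇ(t,k)` of the `t`-part of the Lax pair of the defocusing NLS
associated with the boundary data `(g₀ᵇ, g₁ᵇ)`. -/
def Vb (g₀ g₁ : ℝ → ℂ) (t : ℝ) (k : ℂ) : Matrix (Fin 2) (Fin 2) ℂ :=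
  !![-Complex.I * (‖g₀ t‖ : ℂ) ^ 2, 2 * k * g₀ t + Complex.I * g₁ t;
     2 * k * (starRingEnd ℂ) (g₀ t) - Complex.I * (starRingEnd ℂ) (g₁ t),
       Complex.I * (‖g₀ t‖ : ℂ) ^ 2]

section Aux

attribute [local instance] Matrix.linftyOpSemiNormedRing Matrix.linftyOpNormedRing
  Matrix.linftyOpNormedAlgebra

lemma exp_smul_sigma3 (z : ℂ) :
    NormedSpace.exp (z • sigma3) = !![Complex.exp z, 0; 0, Complex.exp (-z)] := by
  have h : z • sigma3 = Matrix.diagonal ![z, -z] := by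
    ext i j; fin_cases i <;> fin_cases j <;> simp [sigma3, Matrix.diagonal]
  rw [h, Matrix.exp_diagonal]
  ext i j
  fin_cases i <;> fin_cases j <;>
    simp [Matrix.diagonal, Pi.coe_exp, ← Complex.exp_eq_exp_ℂ]

lemma hasDerivAt_exp_real (B : Matrix (Fin 2) (Fin 2) ℂ) (t : ℝ) :
    HasDerivAt (fun s : ℝ => NormedSpace.exp ((s : ℂ) • B))
      (NormedSpace.exp ((t : ℂ) • B) * B) t := by
  have h1 : HasDerivAt (fun z : ℂ => NormedSpace.exp (z • B))
      (NormedSpace.exp ((t : ℂ) • B) * B) (t : ℂ) := hasDerivAt_exp_smul_const B (t : ℂ)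
  have h2 : HasDerivAt (fun s : ℝ => (s : ℂ)) 1 t := by
    simpa using (hasDerivAt_id t).ofReal_comp
  have h3 := h1.scomp t h2
  rw [one_smul] at h3
  exact h3

lemma hasDerivAt_exp_real' (B : Matrix (Fin 2) (Fin 2) ℂ) (t : ℝ) :
    HasDerivAt (fun s : ℝ => NormedSpace.exp ((s : ℂ) • B))
      (B * NormedSpace.exp ((t : ℂ) • B)) t := by
  have h1 : HasDerivAt (fun z : ℂ => NormedSpace.exp (z • B))
      (B * NormedSpace.exp ((t : ℂ) • B)) (t : ℂ) := hasDerivAt_exp_smul_const' B (t : ℂ)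
  have h2 : HasDerivAt (fun s : ℝ => (s : ℂ)) 1 t := by
    simpa using (hasDerivAt_id t).ofReal_comp
  have h3 := h1.scomp t h2
  rw [one_smul] at h3
  exact h3

lemma sum_smul_stdBasis (X : Matrix (Fin 2) (Fin 2) ℂ) :
    ∑ i : Fin 2, ∑ j : Fin 2, X i j • Matrix.single i j (1 : ℂ) = X := by
  conv_rhs => rw [matrix_eq_sum_single X]
  simp [Matrix.smul_single]

lemma hasDerivAt_matrix {ψ : ℝ → Matrix (Fin 2) (Fin 2) ℂ} {D : Matrix (Fin 2) (Fin 2) ℂ} {t : ℝ}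
    (h : ∀ i j : Fin 2, HasDerivAt (fun s => ψ s i j) (D i j) t) :
    HasDerivAt ψ D t := by
  have hsum : HasDerivAt
      (fun s => ∑ i : Fin 2, ∑ j : Fin 2, ψ s i j • Matrix.single i j (1 : ℂ))
      (∑ i : Fin 2, ∑ j : Fin 2, D i j • Matrix.single i j (1 : ℂ)) t :=
    HasDerivAt.fun_sum fun i _ => HasDerivAt.fun_sum fun j _ => (h i j).smul_const _
  simpa only [sum_smul_stdBasis] using hsum

lemma exp_mul_exp_neg (B : Matrix (Fin 2) (Fin 2) ℂ) (z : ℂ) :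
    NormedSpace.exp (z • B) * NormedSpace.exp (z • (-B)) = 1 := by
  rw [← Matrix.exp_add_of_commute]
  · simp
  · exact ((Commute.refl B).neg_right.smul_left z).smul_right z

end Aux

/-- For single exponential boundary data `g₀ᵇ(t) = α e^{iωt}`, `g₁ᵇ(t) = c e^{iωt}`, the
unique solution of `ψ_t + 2ik²σ₃ψ = Vᵇψ`, `ψ(0,k) = I`, is given explicitly by
`ψ(t,k) = exp((iωt/2)σ₃) · exp(t W(k))` with
`W(k) = -(iω/2)σ₃ - 2ik²σ₃ + Vᵇ(0,k)`. -/
theorem psi_explicit_single_exponential (α ω : ℝ) (c : ℂ) (hα : 0 < α) (k : ℂ)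
    (ψ : ℝ → Matrix (Fin 2) (Fin 2) ℂ)
    (hODE : ∀ t : ℝ, ∀ i j : Fin 2,
      HasDerivAt (fun s => ψ s i j)
        (((Vb (fun t => (α : ℂ) * Complex.exp (Complex.I * ω * t))
              (fun t => c * Complex.exp (Complex.I * ω * t)) t k
            - (2 * Complex.I * k ^ 2) • sigma3) * ψ t) i j) t)
    (hinit : ψ 0 = 1) :
    ∀ t : ℝ,
      ψ t =
        NormedSpace.exp ((Complex.I * ω * t / 2) • sigma3) *
          NormedSpace.exp ((t : ℂ) •
            ((-(Complex.I * ω / 2)) • sigma3 - (2 * Complex.I * k ^ 2) • sigma3 +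
              Vb (fun t => (α : ℂ) * Complex.exp (Complex.I * ω * t))
                (fun t => c * Complex.exp (Complex.I * ω * t)) 0 k)) := by
  letI : SeminormedRing (Matrix (Fin 2) (Fin 2) ℂ) := Matrix.linftyOpSemiNormedRing
  letI : NormedRing (Matrix (Fin 2) (Fin 2) ℂ) := Matrix.linftyOpNormedRing
  letI : NormedAlgebra ℂ (Matrix (Fin 2) (Fin 2) ℂ) := Matrix.linftyOpNormedAlgebra
  set g₀ : ℝ → ℂ := fun t => (α : ℂ) * Complex.exp (Complex.I * ω * t) with hg₀
  set g₁ : ℝ → ℂ := fun t => c * Complex.exp (Complex.I * ω * t) with hg₁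
  set S : Matrix (Fin 2) (Fin 2) ℂ := ((Complex.I * ω / 2 : ℂ)) • sigma3 with hSdef
  set W : Matrix (Fin 2) (Fin 2) ℂ :=
    (-(Complex.I * ω / 2)) • sigma3 - (2 * Complex.I * k ^ 2) • sigma3 + Vb g₀ g₁ 0 k with hWdef
  set A : ℝ → Matrix (Fin 2) (Fin 2) ℂ :=
    fun t => Vb g₀ g₁ t k - (2 * Complex.I * k ^ 2) • sigma3 with hAdef
  have hψ : ∀ t : ℝ, HasDerivAt ψ (A t * ψ t) t := fun t => hasDerivAt_matrix (hODE t)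
  have hnorm : ∀ s : ℝ, ‖g₀ s‖ = α := by
    intro s
    rw [hg₀]
    simp [Complex.norm_exp, abs_of_pos hα]
  -- explicit form of exp (t • (-S))
  have hE : ∀ t : ℝ, NormedSpace.exp ((t : ℂ) • (-S)) =
      !![Complex.exp (-(Complex.I * ω * t / 2)), 0; 0, Complex.exp (Complex.I * ω * t / 2)] := by
    intro t
    have h : (t : ℂ) • (-S) = (-(Complex.I * ω * t / 2)) • sigma3 := by
      rw [hSdef, smul_neg, smul_smul, ← neg_smul]
      congr 1
      ring
    rw [h, exp_smul_sigma3, neg_neg]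
  -- the key conjugation identity
  have key : ∀ t : ℝ, (W + S) * NormedSpace.exp ((t : ℂ) • (-S)) =
      NormedSpace.exp ((t : ℂ) • (-S)) * A t := by
    intro t
    rw [hE t, hWdef, hSdef, hAdef]
    have e1 : Complex.exp (-(Complex.I * ω * t / 2)) * Complex.exp (Complex.I * ω * t) =
        Complex.exp (Complex.I * ω * t / 2) := by
      rw [← Complex.exp_add]; ring_nf
    have e2 : Complex.exp (Complex.I * ω * t / 2) * Complex.exp (-(Complex.I * ω * t)) =
        Complex.exp (-(Complex.I * ω * t / 2)) := by
      rw [← Complex.exp_add]; ring_nf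
    ext i j
    fin_cases i <;> fin_cases j
    · simp [Vb, sigma3, hg₀, hg₁, Matrix.mul_apply, Fin.sum_univ_two, hnorm, _root_.map_mul,
        Complex.conj_ofReal, ← Complex.exp_conj, Complex.conj_I, abs_of_pos hα, Complex.norm_exp]
      ring
    · simp [Vb, sigma3, hg₀, hg₁, Matrix.mul_apply, Fin.sum_univ_two, hnorm, _root_.map_mul,
        Complex.conj_ofReal, ← Complex.exp_conj, Complex.conj_I, abs_of_pos hα]
      linear_combination (-(2 * k * (α : ℂ) + Complex.I * c)) * e1
    · simp [Vb, sigma3, hg₀, hg₁, Matrix.mul_apply, Fin.sum_univ_two, hnorm, _root_.map_mul,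
        Complex.conj_ofReal, ← Complex.exp_conj, Complex.conj_I, abs_of_pos hα]
      linear_combination (-(2 * k * (α : ℂ) - Complex.I * (starRingEnd ℂ) c)) * e2
    · simp [Vb, sigma3, hg₀, hg₁, Matrix.mul_apply, Fin.sum_univ_two, hnorm, _root_.map_mul,
        Complex.conj_ofReal, ← Complex.exp_conj, Complex.conj_I, abs_of_pos hα, Complex.norm_exp]
      ring
  -- derivative of u is zero
  set u : ℝ → Matrix (Fin 2) (Fin 2) ℂ :=
    fun t => NormedSpace.exp ((t : ℂ) • (-W)) *
      (NormedSpace.exp ((t : ℂ) • (-S)) * ψ t) with hudef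
  have hu : ∀ t : ℝ, HasDerivAt u 0 t := by
    intro t
    have hinner : HasDerivAt (fun s : ℝ => NormedSpace.exp ((s : ℂ) • (-S)) * ψ s)
        ((-S) * NormedSpace.exp ((t : ℂ) • (-S)) * ψ t +
          NormedSpace.exp ((t : ℂ) • (-S)) * (A t * ψ t)) t :=
      (hasDerivAt_exp_real' (-S) t).mul (hψ t)
    have houter := (hasDerivAt_exp_real (-W) t).mul hinner
    have hzero : NormedSpace.exp ((t : ℂ) • (-W)) * (-W) *
          (NormedSpace.exp ((t : ℂ) • (-S)) * ψ t) +
        NormedSpace.exp ((t : ℂ) • (-W)) *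
          ((-S) * NormedSpace.exp ((t : ℂ) • (-S)) * ψ t +
            NormedSpace.exp ((t : ℂ) • (-S)) * (A t * ψ t)) = 0 := by
      have expand : NormedSpace.exp ((t : ℂ) • (-W)) * (-W) *
            (NormedSpace.exp ((t : ℂ) • (-S)) * ψ t) +
          NormedSpace.exp ((t : ℂ) • (-W)) *
            ((-S) * NormedSpace.exp ((t : ℂ) • (-S)) * ψ t +
              NormedSpace.exp ((t : ℂ) • (-S)) * (A t * ψ t)) =
          NormedSpace.exp ((t : ℂ) • (-W)) *
            ((NormedSpace.exp ((t : ℂ) • (-S)) * A t -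
              (W + S) * NormedSpace.exp ((t : ℂ) • (-S))) * ψ t) := by
        noncomm_ring
      rw [expand, key t, sub_self, zero_mul, mul_zero]
    exact hzero ▸ houter
  have hconst : ∀ t : ℝ, u t = u 0 := fun t =>
    is_const_of_deriv_eq_zero (fun x => (hu x).differentiableAt)
      (fun x => (hu x).deriv) t 0
  have hu0 : u 0 = 1 := by
    rw [hudef]
    simp [hinit]
  intro t
  have hut : NormedSpace.exp ((t : ℂ) • (-W)) *
      (NormedSpace.exp ((t : ℂ) • (-S)) * ψ t) = 1 := by
    have := hconst t
    rw [hu0] at this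
    exact this
  have hSinv := exp_mul_exp_neg S (t : ℂ)
  have hWinv := exp_mul_exp_neg W (t : ℂ)
  have hfirst : (Complex.I * ω * t / 2) • sigma3 = (t : ℂ) • S := by
    rw [hSdef, smul_smul]
    congr 1
    ring
  rw [hfirst, hWdef]
  calc ψ t = 1 * ψ t := (one_mul _).symm
    _ = (NormedSpace.exp ((t : ℂ) • S) * NormedSpace.exp ((t : ℂ) • (-S))) * ψ t := by
        rw [hSinv]
    _ = NormedSpace.exp ((t : ℂ) • S) * (NormedSpace.exp ((t : ℂ) • (-S)) * ψ t) := by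
        rw [mul_assoc]
    _ = NormedSpace.exp ((t : ℂ) • S) *
        ((NormedSpace.exp ((t : ℂ) • W) * NormedSpace.exp ((t : ℂ) • (-W))) *
          (NormedSpace.exp ((t : ℂ) • (-S)) * ψ t)) := by
        rw [hWinv, one_mul]
    _ = NormedSpace.exp ((t : ℂ) • S) * (NormedSpace.exp ((t : ℂ) • W) *
        (NormedSpace.exp ((t : ℂ) • (-W)) * (NormedSpace.exp ((t : ℂ) • (-S)) * ψ t))) := by
        rw [mul_assoc]
    _ = NormedSpace.exp ((t : ℂ) • S) * NormedSpace.exp ((t : ℂ) • W) := by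
        rw [hut, mul_one]

end
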